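/- (Operator identity for L₁.) Fix k with 1 ≤ k ≤ n, α ∈ ℂⁿ and δ ∈ ℂ. For every twice continuously differentiable function f from an open subset of ℝ^{2n} (coordinates x_{11},…,x_{1n},x_{21},…,x_{2n}) to ℂ, at every point of its domain: Σ_{i≠k} (x_{1i}x_{2k} − x_{1k}x_{2i})·∂_{2i}∂_{1k}f + (Σ_{i=1}^n α_i)·x_{1k}·∂_{1k}f − α_k(Σ_{i=1}^n α_i − δ)·f + α_k·(Σ_{i=1}^n x_{2i}∂_{2i}f − δ·f) = Σ_{i≠k} x_{1i}x_{2k}·(∂_{2i}∂_{1k}f − ∂_{2k}∂_{1i}f) − Σ_{i=1}^n [x_{2i}∂_{2i}(z_k f) − α_i·(z_k f)] + Σ_{i=1}^n x_{2k}∂_{2k}(z_i f), where ∂_{ij} = ∂/∂x_{ij} and z_i f = x_{1i}∂_{1i}f + x_{2i}∂_{2i}f − α_i f. -/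

import Mathlib

open Complex Function

/-- Partial derivative of `f` with respect to the coordinate `p`. -/
noncomputable def pd {n : ℕ} (p : Fin 2 × Fin n)
    (f : ((Fin 2 × Fin n) → ℝ) → ℂ) (x : (Fin 2 × Fin n) → ℝ) : ℂ :=
  deriv (fun s : ℝ => f (Function.update x p s)) (x p)

/-- The Euler operator `z_i f = x_{1i}∂_{1i}f + x_{2i}∂_{2i}f − α_i f`. -/
noncomputable def zop {n : ℕ} (α : Fin n → ℂ) (i : Fin n)
    (f : ((Fin 2 × Fin n) → ℝ) → ℂ) (x : (Fin 2 × Fin n) → ℝ) : ℂ :=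
  (x (0, i) : ℂ) * pd (0, i) f x + (x (1, i) : ℂ) * pd (1, i) f x - α i * f x

namespace Stmt16Aux

variable {n : ℕ}

/-- The standard basis vector. -/
def ev (p : Fin 2 × Fin n) : (Fin 2 × Fin n) → ℝ := Pi.single p (1 : ℝ)

lemma update_eq (x : (Fin 2 × Fin n) → ℝ) (p : Fin 2 × Fin n) (s : ℝ) :
    Function.update x p s = x + (s - x p) • ev p := by
  funext q
  by_cases h : q = p
  · subst h; simp [ev]
  · simp [Function.update_of_ne h, ev, Pi.single_apply, h]

lemma hasDerivAt_update (x : (Fin 2 × Fin n) → ℝ) (p : Fin 2 × Fin n) (s₀ : ℝ) :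
    HasDerivAt (fun s => Function.update x p s) (ev p) s₀ := by
  simp only [update_eq]
  simpa using (((hasDerivAt_id s₀).sub_const (x p)).smul_const (ev p)).const_add x

lemma continuous_update (x : (Fin 2 × Fin n) → ℝ) (p : Fin 2 × Fin n) :
    Continuous (fun s : ℝ => Function.update x p s) := by
  simp only [update_eq]; fun_prop

lemma pd_eq {f : ((Fin 2 × Fin n) → ℝ) → ℂ} {x : (Fin 2 × Fin n) → ℝ}
    {F : ((Fin 2 × Fin n) → ℝ) →L[ℝ] ℂ} (hF : HasFDerivAt f F x) (p : Fin 2 × Fin n) :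
    pd p f x = F (ev p) := by
  have h := (hF.comp_hasDerivAt_of_eq (x p) (hasDerivAt_update x p (x p))
    (Function.update_eq_self p x).symm)
  rw [pd, show (fun s : ℝ => f (Function.update x p s)) = f ∘ (fun s => Function.update x p s) from rfl]
  exact h.deriv


variable {f : ((Fin 2 × Fin n) → ℝ) → ℂ} {U : Set ((Fin 2 × Fin n) → ℝ)}
  {x : (Fin 2 × Fin n) → ℝ}

lemma hasFDerivAt_of_mem (hf : ContDiffOn ℝ 2 f U) (hU : IsOpen U) (hx : x ∈ U) :
    HasFDerivAt f (fderiv ℝ f x) x :=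
  ((hf.differentiableOn (by norm_num)).differentiableAt (hU.mem_nhds hx)).hasFDerivAt

lemma hasFDerivAt_fderiv (hf : ContDiffOn ℝ 2 f U) (hU : IsOpen U) (hx : x ∈ U) :
    HasFDerivAt (fderiv ℝ f) (fderiv ℝ (fderiv ℝ f) x) x :=
  ((((hf.fderiv_of_isOpen hU (by norm_num) : ContDiffOn ℝ 1 (fderiv ℝ f) U)).differentiableOn
    (by norm_num)).differentiableAt (hU.mem_nhds hx)).hasFDerivAt

lemma mem_nhds_preimage (hU : IsOpen U) (hx : x ∈ U) (p : Fin 2 × Fin n) :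
    (fun s : ℝ => Function.update x p s) ⁻¹' U ∈ nhds (x p) := by
  apply (hU.preimage (continuous_update x p)).mem_nhds
  simpa [Function.update_eq_self] using hx

lemma hasDerivAt_f_slice (hf : ContDiffOn ℝ 2 f U) (hU : IsOpen U) (hx : x ∈ U)
    (p : Fin 2 × Fin n) :
    HasDerivAt (fun s => f (Function.update x p s)) (fderiv ℝ f x (ev p)) (x p) :=
  (hasFDerivAt_of_mem hf hU hx).comp_hasDerivAt_of_eq (x p) (hasDerivAt_update x p (x p))
    (Function.update_eq_self p x).symm

lemma hasDerivAt_fderiv_slice (hf : ContDiffOn ℝ 2 f U) (hU : IsOpen U) (hx : x ∈ U)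
    (p q : Fin 2 × Fin n) :
    HasDerivAt (fun s => fderiv ℝ f (Function.update x p s) (ev q))
      (fderiv ℝ (fderiv ℝ f) x (ev p) (ev q)) (x p) := by
  have h := (hasFDerivAt_fderiv hf hU hx).comp_hasDerivAt_of_eq (x p)
    (hasDerivAt_update x p (x p)) (Function.update_eq_self p x).symm
  have h2 := h.clm_apply (hasDerivAt_const (x p) (ev q))
  simpa [Function.comp] using h2

lemma pd_pd (hf : ContDiffOn ℝ 2 f U) (hU : IsOpen U) (hx : x ∈ U) (p q : Fin 2 × Fin n) :
    pd p (pd q f) x = fderiv ℝ (fderiv ℝ f) x (ev p) (ev q) := by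
  have hev : ∀ᶠ s in nhds (x p), pd q f (Function.update x p s)
      = fderiv ℝ f (Function.update x p s) (ev q) := by
    filter_upwards [mem_nhds_preimage hU hx p] with s hs
    exact pd_eq (hasFDerivAt_of_mem hf hU hs) q
  rw [pd, Filter.EventuallyEq.deriv_eq hev]
  exact (hasDerivAt_fderiv_slice hf hU hx p q).deriv

lemma hasDerivAt_coord (x : (Fin 2 × Fin n) → ℝ) (p q : Fin 2 × Fin n) (s₀ : ℝ) :
    HasDerivAt (fun s : ℝ => ((Function.update x p s q : ℝ) : ℂ))
      (if q = p then 1 else 0) s₀ := by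
  by_cases h : q = p
  · subst h
    simp only [Function.update_self, if_pos rfl]
    simpa using (hasDerivAt_id s₀).ofReal_comp
  · simp only [Function.update_of_ne h, if_neg h]
    exact hasDerivAt_const _ _

lemma pd_zop (hf : ContDiffOn ℝ 2 f U) (hU : IsOpen U) (hx : x ∈ U)
    (α : Fin n → ℂ) (j : Fin n) (p : Fin 2 × Fin n) :
    pd p (zop α j f) x =
      (if ((0 : Fin 2), j) = p then fderiv ℝ f x (ev (0, j)) else 0)
        + (x (0, j) : ℂ) * fderiv ℝ (fderiv ℝ f) x (ev p) (ev (0, j))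
        + ((if ((1 : Fin 2), j) = p then fderiv ℝ f x (ev (1, j)) else 0)
        + (x (1, j) : ℂ) * fderiv ℝ (fderiv ℝ f) x (ev p) (ev (1, j)))
        - α j * fderiv ℝ f x (ev p) := by
  have hev : ∀ᶠ s in nhds (x p), zop α j f (Function.update x p s)
      = ((Function.update x p s (0, j) : ℝ) : ℂ)
          * fderiv ℝ f (Function.update x p s) (ev (0, j))
        + ((Function.update x p s (1, j) : ℝ) : ℂ)
          * fderiv ℝ f (Function.update x p s) (ev (1, j))
        - α j * f (Function.update x p s) := by
    filter_upwards [mem_nhds_preimage hU hx p] with s hs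
    rw [zop, pd_eq (hasFDerivAt_of_mem hf hU hs), pd_eq (hasFDerivAt_of_mem hf hU hs)]
  rw [pd, Filter.EventuallyEq.deriv_eq hev]
  have h1 := (hasDerivAt_coord x p (0, j) (x p)).mul (hasDerivAt_fderiv_slice hf hU hx p (0, j))
  have h2 := (hasDerivAt_coord x p (1, j) (x p)).mul (hasDerivAt_fderiv_slice hf hU hx p (1, j))
  have h3 := (hasDerivAt_f_slice hf hU hx p).const_mul (α j)
  have h := (h1.add h2).sub h3
  erw [h.deriv]
  simp only [Function.update_eq_self, ite_mul, one_mul, zero_mul]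

end Stmt16Aux

/-- Abstract algebraic form of the identity. -/
lemma key_algebra {R : Type*} [CommRing R] {n : ℕ} (k : Fin n) (α : Fin n → R) (δ fx : R)
    (x0 x1 F1a F1b : Fin n → R) (S T : Fin n → Fin n → R)
    (hT : ∀ i, T k i = T i k) :
    ∑ i ∈ Finset.univ \ {k}, (x0 i * x1 k - x0 k * x1 i) * S i k
      + (∑ i, α i) * x0 k * F1a k - α k * ((∑ i, α i) - δ) * fx
      + α k * ((∑ i, x1 i * F1b i) - δ * fx)
    = ∑ i ∈ Finset.univ \ {k}, x0 i * x1 k * (S i k - S k i)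
      - ∑ i, (x1 i * (x0 k * S i k + ((if k = i then F1b k else 0) + x1 k * T i k)
            - α k * F1b i)
          - α i * (x0 k * F1a k + x1 k * F1b k - α k * fx))
      + ∑ i, x1 k * (x0 i * S k i + ((if i = k then F1b i else 0) + x1 i * T k i)
          - α i * F1b k) := by
  classical
  rw [Finset.sum_sdiff_eq_sub (Finset.subset_univ _),
    Finset.sum_sdiff_eq_sub (Finset.subset_univ _), Finset.sum_singleton, Finset.sum_singleton]
  simp only [hT]
  simp only [mul_add, add_mul, mul_sub, sub_mul, mul_ite, ite_mul, mul_zero, zero_mul,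
    Finset.mul_sum, Finset.sum_mul, Finset.sum_add_distrib, Finset.sum_sub_distrib,
    Finset.sum_ite_eq, Finset.sum_ite_eq', Finset.mem_univ, if_true]
  have hB : ∑ i, x1 i * (x0 k * S i k) = ∑ i, x0 k * x1 i * S i k :=
    Finset.sum_congr rfl fun i _ => by ring
  have hH : ∑ i, x1 k * (x1 i * T i k) = ∑ i, x1 i * (x1 k * T i k) :=
    Finset.sum_congr rfl fun i _ => by ring
  have hE : ∑ i, x1 i * (α k * F1b i) = ∑ i, α k * (x1 i * F1b i) :=
    Finset.sum_congr rfl fun i _ => by ring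
  have hD : ∑ i, α i * (α k * fx) = ∑ i, α k * α i * fx :=
    Finset.sum_congr rfl fun i _ => by ring
  have hC : ∑ i, α i * (x0 k * F1a k) = ∑ i, α i * x0 k * F1a k :=
    Finset.sum_congr rfl fun i _ => by ring
  have hI2 : ∑ i, α i * (x1 k * F1b k) = ∑ i, α i * x1 k * F1b k :=
    Finset.sum_congr rfl fun i _ => by ring
  have hG : ∑ i, x1 k * (x0 i * S k i) = ∑ i, x0 i * x1 k * S k i :=
    Finset.sum_congr rfl fun i _ => by ring
  have hI : ∑ i, x1 k * (α i * F1b k) = ∑ i, α i * x1 k * F1b k :=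
    Finset.sum_congr rfl fun i _ => by ring
  rw [hB, hH, hE, hD, hC, hI2, hG, hI]
  ring

/-- the Weyl-algebra reduction identity for the operator `L₁`,
stated as an identity of differential operators applied to an arbitrary `C²`
function `f` on an open subset of `ℝ^{2n}`. -/
theorem stmt16 {n : ℕ} (hn : 1 ≤ n) (α : Fin n → ℂ) (δ : ℂ) (k : Fin n)
    (U : Set ((Fin 2 × Fin n) → ℝ)) (hU : IsOpen U)
    (f : ((Fin 2 × Fin n) → ℝ) → ℂ) (hf : ContDiffOn ℝ 2 f U)
    (x : (Fin 2 × Fin n) → ℝ) (hx : x ∈ U) :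
    ∑ i ∈ Finset.univ \ {k},
        ((x (0, i) * x (1, k) - x (0, k) * x (1, i) : ℝ) : ℂ)
          * pd (1, i) (pd (0, k) f) x
      + (∑ i, α i) * (x (0, k) : ℂ) * pd (0, k) f x
      - α k * ((∑ i, α i) - δ) * f x
      + α k * ((∑ i, (x (1, i) : ℂ) * pd (1, i) f x) - δ * f x)
      = ∑ i ∈ Finset.univ \ {k},
          ((x (0, i) * x (1, k) : ℝ) : ℂ)
            * (pd (1, i) (pd (0, k) f) x - pd (1, k) (pd (0, i) f) x)
        - ∑ i, ((x (1, i) : ℂ) * pd (1, i) (zop α k f) x - α i * zop α k f x)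
        + ∑ i, (x (1, k) : ℂ) * pd (1, k) (zop α i f) x := by
  classical
  have hCA : ContDiffAt ℝ 2 f x := hf.contDiffAt (hU.mem_nhds hx)
  have hsymm := hCA.isSymmSndFDerivAt (by simp)
  set F1 : (Fin 2 × Fin n) → ℂ := fun p => fderiv ℝ f x (Stmt16Aux.ev p) with hF1def
  set F2 : (Fin 2 × Fin n) → (Fin 2 × Fin n) → ℂ :=
    fun p q => fderiv ℝ (fderiv ℝ f) x (Stmt16Aux.ev p) (Stmt16Aux.ev q) with hF2def
  have hpd : ∀ p, pd p f x = F1 p := fun p => Stmt16Aux.pd_eq (Stmt16Aux.hasFDerivAt_of_mem hf hU hx) p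
  have hpdpd : ∀ p q, pd p (pd q f) x = F2 p q := fun p q => Stmt16Aux.pd_pd hf hU hx p q
  have hz : ∀ i, zop α i f x
      = (x (0, i) : ℂ) * F1 (0, i) + (x (1, i) : ℂ) * F1 (1, i) - α i * f x := by
    intro i; rw [zop, hpd, hpd]
  have hpz : ∀ i j : Fin n, pd (1, i) (zop α j f) x
      = (x (0, j) : ℂ) * F2 (1, i) (0, j)
        + ((if j = i then F1 (1, j) else 0) + (x (1, j) : ℂ) * F2 (1, i) (1, j))
        - α j * F1 (1, i) := by
    intro i j
    rw [Stmt16Aux.pd_zop hf hU hx α j (1, i)]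
    simp only [Prod.mk.injEq, show ((0 : Fin 2) = 1) = False by simp, false_and, if_false,
      true_and, zero_add]
    rfl
  have hT : ∀ i, F2 (1, k) (1, i) = F2 (1, i) (1, k) := fun i => hsymm (Stmt16Aux.ev (1, k)) (Stmt16Aux.ev (1, i))
  simp only [hpdpd, hpd, hz, hpz]
  push_cast
  exact key_algebra k α δ (f x) (fun i => ((x (0, i) : ℝ) : ℂ)) (fun i => ((x (1, i) : ℝ) : ℂ))
    (fun i => F1 (0, i)) (fun i => F1 (1, i)) (fun i j => F2 (1, i) (0, j))
    (fun i j => F2 (1, i) (1, j)) hT
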